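/- Let σ < -1/2, let ψ: ℝ → ℂ be a Schwartz function with ∫_ℝ ψ = 0, and for λ ≥ 2 set ψ_λ(x) := λψ(λx). Then there is a constant C = C(ψ, σ) such that ‖ψ_λ‖²_{H^σ(ℝ)} ≤ C (λ^{-1} + λ^{1+2σ}) for all λ ≥ 2, where ‖f‖²_{H^σ} := ∫_ℝ (1+ξ²)^σ |f̂(ξ)|² dξ. -/

import Mathlib

open MeasureTheory Set
open scoped FourierTransform

private lemma four_scale (ψ : SchwartzMap ℝ ℂ) {lam : ℝ} (hl : 0 < lam) (ξ : ℝ) :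
    𝓕 (fun x => (lam : ℂ) * ψ (lam * x)) ξ = 𝓕 (⇑ψ) (ξ / lam) := by
  set g : ℝ → ℂ := fun u => Real.fourierChar (-(u * (ξ / lam))) • ψ u with hg
  have hpt : ∀ v : ℝ, Real.fourierChar (-(v * ξ)) • ((lam : ℂ) * ψ (lam * v))
      = lam • g (lam * v) := by
    intro v
    have harg : lam * v * (ξ / lam) = v * ξ := by field_simp
    simp only [hg, harg, Circle.smul_def, Complex.real_smul, smul_eq_mul]
    ring
  rw [Real.fourier_real_eq, Real.fourier_real_eq]
  calc ∫ v : ℝ, Real.fourierChar (-(v * ξ)) • ((lam : ℂ) * ψ (lam * v))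
      = ∫ v : ℝ, lam • g (lam * v) := by simp_rw [hpt]
    _ = lam • ∫ v : ℝ, g (lam * v) := integral_smul _ _
    _ = lam • (|lam⁻¹| • ∫ u : ℝ, g u) := by
        rw [MeasureTheory.Measure.integral_comp_mul_left g lam]
    _ = ∫ u : ℝ, g u := by
        rw [smul_smul, abs_of_pos (inv_pos.mpr hl), mul_inv_cancel₀ hl.ne', one_smul]

private lemma ptQ {σ ξ : ℝ} (hσ : σ ≤ 0) (hξ : ξ ≠ 0) : (1 + ξ ^ 2) ^ σ ≤ |ξ| ^ (2 * σ) := by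
  have h1 : (0:ℝ) < ξ ^ 2 := by positivity
  have := Real.rpow_le_rpow_of_nonpos h1 (by linarith : ξ ^ 2 ≤ 1 + ξ ^ 2) hσ
  calc (1 + ξ ^ 2) ^ σ ≤ (ξ ^ 2) ^ σ := this
    _ = |ξ| ^ (2 * σ) := by
        rw [← sq_abs, ← Real.rpow_natCast |ξ| 2, ← Real.rpow_mul (abs_nonneg ξ)]
        norm_num

private lemma ptP {σ lam ξ : ℝ} (hσ : σ ≤ 0) (hlam : 1 ≤ lam) (hξ : |ξ| ≤ lam) :
    (1 + ξ ^ 2) ^ σ * ξ ^ 2 ≤ 1 + lam ^ (2 * σ + 2) := by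
  have hlam0 : (0:ℝ) < lam := lt_of_lt_of_le one_pos hlam
  have hrn : (0:ℝ) ≤ lam ^ (2 * σ + 2) := Real.rpow_nonneg hlam0.le _
  rcases le_or_gt (|ξ|) 1 with hle | hgt
  · have h1 : (1 + ξ ^ 2) ^ σ ≤ 1 :=
      Real.rpow_le_one_of_one_le_of_nonpos (by nlinarith) hσ
    have h2 : ξ ^ 2 ≤ 1 := by rw [← sq_abs]; nlinarith [abs_nonneg ξ]
    nlinarith [Real.rpow_nonneg (by positivity : (0:ℝ) ≤ 1 + ξ ^ 2) σ]
  · have hξ0 : ξ ≠ 0 := by intro hz; rw [hz] at hgt; simp at hgt; linarith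
    have key : (1 + ξ ^ 2) ^ σ * ξ ^ 2 ≤ |ξ| ^ (2 * σ + 2) := by
      have := ptQ hσ hξ0
      calc (1 + ξ ^ 2) ^ σ * ξ ^ 2 ≤ |ξ| ^ (2 * σ) * ξ ^ 2 := by nlinarith [sq_nonneg ξ]
        _ = |ξ| ^ (2 * σ + 2) := by
            rw [Real.rpow_add (abs_pos.mpr hξ0), ← sq_abs ξ, ← Real.rpow_natCast |ξ| 2]
            norm_num
    rcases le_or_gt 0 (2 * σ + 2) with he | he
    · have : |ξ| ^ (2 * σ + 2) ≤ lam ^ (2 * σ + 2) :=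
        Real.rpow_le_rpow (abs_nonneg ξ) hξ he
      linarith
    · have : |ξ| ^ (2 * σ + 2) ≤ 1 :=
        Real.rpow_le_one_of_one_le_of_nonpos hgt.le he.le
      linarith

theorem mean_zero_scaling_subcritical_bound (σ : ℝ) (hσ : σ < -1/2)
    (ψ : SchwartzMap ℝ ℂ) (h : (∫ x : ℝ, ψ x) = 0) :
    ∃ C : ℝ, ∀ lam : ℝ, 2 ≤ lam →
      (∫ ξ : ℝ, (1 + ξ ^ 2) ^ σ * ‖𝓕 (fun x => (lam : ℂ) * ψ (lam * x)) ξ‖ ^ 2) ≤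
        C * (lam ^ (-1 : ℝ) + lam ^ (1 + 2 * σ)) := by
  have hσ0 : σ ≤ 0 := by linarith
  have h2σ : 2 * σ < -1 := by linarith
  set Φ := SchwartzMap.fourierTransformCLM ℝ ψ with hΦ
  obtain ⟨M, hM0, hM⟩ := Φ.decay 0 0
  obtain ⟨L, hL0, hL⟩ := (SchwartzMap.derivCLM ℝ ℂ Φ).decay 0 0
  simp only [pow_zero, one_mul, norm_iteratedFDeriv_zero] at hM hL
  have hL' : ∀ x, ‖deriv Φ x‖ ≤ L := by
    intro x; simpa [SchwartzMap.derivCLM_apply] using hL x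
  have hΦ0 : Φ 0 = 0 := by
    have : Φ 0 = ∫ x : ℝ, ψ x := by
      rw [hΦ, SchwartzMap.fourierTransformCLM_apply, SchwartzMap.fourier_coe, Real.fourier_real_eq]
      simp
    rw [this, h]
  have hLip : ∀ x : ℝ, ‖Φ x‖ ≤ L * |x| := by
    intro x
    have := Convex.norm_image_sub_le_of_norm_deriv_le (f := ⇑Φ) (s := univ)
      (fun y _ => (Φ.differentiable).differentiableAt) (fun y _ => hL' y)
      convex_univ (mem_univ 0) (mem_univ x)
    simpa [hΦ0, Real.norm_eq_abs] using this
  set D : ℝ := -(2 * σ + 1) with hD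
  have hDpos : 0 < D := by simp [hD]; linarith
  refine ⟨2 * L ^ 2 + 2 * M ^ 2 / D, fun lam hlam => ?_⟩
  have hl1 : (1:ℝ) ≤ lam := by linarith
  have hl0 : (0:ℝ) < lam := by linarith
  set hfun : ℝ → ℝ := fun ξ => (1 + ξ ^ 2) ^ σ * ‖Φ (ξ / lam)‖ ^ 2 with hhfun
  -- rewrite the integrand
  have hEq : (∫ ξ : ℝ, (1 + ξ ^ 2) ^ σ * ‖𝓕 (fun x => (lam : ℂ) * ψ (lam * x)) ξ‖ ^ 2)
      = ∫ ξ : ℝ, hfun ξ := by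
    congr 1; funext ξ
    rw [four_scale ψ hl0 ξ]
    rfl
  rw [hEq]
  -- basic bounds for hfun
  have hfun_nonneg : ∀ ξ, 0 ≤ hfun ξ := fun ξ =>
    mul_nonneg (Real.rpow_nonneg (by positivity) σ) (by positivity)
  have hM2 : ∀ ξ : ℝ, ‖Φ (ξ / lam)‖ ^ 2 ≤ M ^ 2 := fun ξ => by
    nlinarith [norm_nonneg (Φ (ξ / lam)), hM (ξ / lam)]
  have hrp_nonneg : ∀ ξ : ℝ, (0:ℝ) ≤ (1 + ξ ^ 2) ^ σ := fun ξ =>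
    Real.rpow_nonneg (by positivity) σ
  -- integrability
  have hg0 : Integrable (fun ξ : ℝ => (1 + ξ ^ 2) ^ σ) := by
    have h1 : (Module.finrank ℝ ℝ : ℝ) < -(2 * σ) := by
      simp only [Module.finrank_self, Nat.cast_one]; linarith
    refine (integrable_rpow_neg_one_add_norm_sq (μ := (volume : Measure ℝ)) h1).congr
      (ae_of_all _ fun x => ?_)
    simp only [Real.norm_eq_abs, sq_abs]
    congr 1
    ring
  have hcont : Continuous hfun := by
    have c1 : Continuous fun ξ : ℝ => (1 + ξ ^ 2) ^ σ :=
      Continuous.rpow_const (by continuity) (fun x => Or.inl (by positivity))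
    have c2 : Continuous fun ξ : ℝ => ‖Φ (ξ / lam)‖ ^ 2 :=
      ((Φ.continuous.comp (continuous_id.div_const lam)).norm).pow 2
    exact c1.mul c2
  have hint : Integrable hfun := by
    refine (hg0.const_mul (M ^ 2)).mono' hcont.aestronglyMeasurable
      (ae_of_all _ fun ξ => ?_)
    rw [Real.norm_of_nonneg (hfun_nonneg ξ)]
    calc hfun ξ ≤ (1 + ξ ^ 2) ^ σ * M ^ 2 :=
          mul_le_mul_of_nonneg_left (hM2 ξ) (hrp_nonneg ξ)
      _ = M ^ 2 * (1 + ξ ^ 2) ^ σ := mul_comm _ _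
  -- split the integral
  have hsplit : (∫ ξ : ℝ, hfun ξ)
      = (∫ ξ in Icc (-lam) lam, hfun ξ) + ∫ ξ in (Icc (-lam) lam)ᶜ, hfun ξ :=
    (integral_add_compl measurableSet_Icc hint).symm
  -- Part 1 : the slab
  have hpart1 : (∫ ξ in Icc (-lam) lam, hfun ξ)
      ≤ 2 * L ^ 2 * (lam ^ (-1:ℝ) + lam ^ (2 * σ + 1)) := by
    set B : ℝ := L ^ 2 * (1 + lam ^ (2 * σ + 2)) / lam ^ 2 with hB
    have hbd : ∀ ξ ∈ Icc (-lam) lam, ‖hfun ξ‖ ≤ B := by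
      intro ξ hξ
      have habs : |ξ| ≤ lam := abs_le.mpr ⟨hξ.1, hξ.2⟩
      rw [Real.norm_of_nonneg (hfun_nonneg ξ)]
      have h1 : ‖Φ (ξ / lam)‖ ≤ L * (|ξ| / lam) := by
        have := hLip (ξ / lam)
        rwa [abs_div, abs_of_pos hl0] at this
      have h2 : ‖Φ (ξ / lam)‖ ^ 2 ≤ L ^ 2 * ξ ^ 2 / lam ^ 2 := by
        have := pow_le_pow_left₀ (norm_nonneg _) h1 2
        calc ‖Φ (ξ / lam)‖ ^ 2 ≤ (L * (|ξ| / lam)) ^ 2 := this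
          _ = L ^ 2 * ξ ^ 2 / lam ^ 2 := by rw [mul_pow, div_pow, sq_abs]; ring
      calc hfun ξ ≤ (1 + ξ ^ 2) ^ σ * (L ^ 2 * ξ ^ 2 / lam ^ 2) :=
            mul_le_mul_of_nonneg_left h2 (hrp_nonneg ξ)
        _ = (L ^ 2 / lam ^ 2) * ((1 + ξ ^ 2) ^ σ * ξ ^ 2) := by ring
        _ ≤ (L ^ 2 / lam ^ 2) * (1 + lam ^ (2 * σ + 2)) := by
            have := ptP hσ0 hl1 habs
            have hnn : (0:ℝ) ≤ L ^ 2 / lam ^ 2 := by positivity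
            exact mul_le_mul_of_nonneg_left this hnn
        _ = B := by rw [hB]; ring
    have hnorm := norm_setIntegral_le_of_norm_le_const (μ := volume)
      (s := Icc (-lam) lam) measure_Icc_lt_top hbd
    rw [measureReal_def, Real.volume_Icc, ENNReal.toReal_ofReal (by linarith : (0:ℝ) ≤ lam - -lam)] at hnorm
    have e1 : lam ^ (2 * σ + 2) = lam ^ (2 * σ + 1) * lam := by
      rw [← Real.rpow_add_one hl0.ne']; ring_nf
    have e2 : lam ^ (-1:ℝ) = lam⁻¹ := Real.rpow_neg_one lam
    calc (∫ ξ in Icc (-lam) lam, hfun ξ) ≤ ‖∫ ξ in Icc (-lam) lam, hfun ξ‖ :=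
          le_abs_self _
      _ ≤ B * (lam - -lam) := hnorm
      _ = 2 * L ^ 2 * (lam ^ (-1:ℝ) + lam ^ (2 * σ + 1)) := by
          rw [hB, e1, e2]
          field_simp
          ring
  -- Part 2 : the tail
  have hQbd : ∀ ξ : ℝ, lam < |ξ| → hfun ξ ≤ M ^ 2 * |ξ| ^ (2 * σ) := by
    intro ξ hξ
    have hξ0 : ξ ≠ 0 := by
      intro hz; rw [hz] at hξ; simp at hξ; linarith
    have h1 := ptQ hσ0 hξ0
    calc hfun ξ ≤ (1 + ξ ^ 2) ^ σ * M ^ 2 :=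
          mul_le_mul_of_nonneg_left (hM2 ξ) (hrp_nonneg ξ)
      _ ≤ |ξ| ^ (2 * σ) * M ^ 2 := mul_le_mul_of_nonneg_right h1 (by positivity)
      _ = M ^ 2 * |ξ| ^ (2 * σ) := mul_comm _ _
  have hIoiT : IntegrableOn (fun ξ : ℝ => M ^ 2 * ξ ^ (2 * σ)) (Ioi lam) :=
    (integrableOn_Ioi_rpow_of_lt h2σ hl0).const_mul _
  have hV : (∫ ξ in Ioi lam, M ^ 2 * ξ ^ (2 * σ)) = M ^ 2 * (-lam ^ (2 * σ + 1) / (2 * σ + 1)) := by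
    rw [MeasureTheory.integral_const_mul, integral_Ioi_rpow_of_lt h2σ hl0]
  have hIoi : (∫ ξ in Ioi lam, hfun ξ) ≤ M ^ 2 * (-lam ^ (2 * σ + 1) / (2 * σ + 1)) := by
    rw [← hV]
    refine setIntegral_mono_on (hint.integrableOn) hIoiT measurableSet_Ioi fun x hx => ?_
    have hx' : lam < x := hx
    have habs : |x| = x := abs_of_pos (lt_trans hl0 hx')
    have hb := hQbd x (by rw [habs]; exact hx')
    rwa [habs] at hb
  have hIio : (∫ ξ in Iio (-lam), hfun ξ) ≤ M ^ 2 * (-lam ^ (2 * σ + 1) / (2 * σ + 1)) := by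
    have hflip : (∫ ξ in Iio (-lam), hfun ξ) = ∫ ξ in Ioi lam, hfun (-ξ) := by
      rw [← integral_Iic_eq_integral_Iio]
      have := integral_comp_neg_Iic (-lam) (fun y => hfun (-y))
      simp only [neg_neg] at this
      rw [← this]
    rw [hflip, ← hV]
    refine setIntegral_mono_on ((hint.comp_neg).integrableOn) hIoiT measurableSet_Ioi
      fun x hx => ?_
    have hx' : lam < x := hx
    have habs : |(-x)| = x := by rw [abs_neg]; exact abs_of_pos (lt_trans hl0 hx')
    have := hQbd (-x) (by rw [habs]; exact hx')
    rwa [habs] at this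
  have hpart2 : (∫ ξ in (Icc (-lam) lam)ᶜ, hfun ξ)
      ≤ (2 * M ^ 2 / D) * lam ^ (2 * σ + 1) := by
    have hcompl : (Icc (-lam) lam)ᶜ = Iio (-lam) ∪ Ioi lam := by
      ext x
      simp only [mem_compl_iff, mem_Icc, mem_union, mem_Iio, mem_Ioi, not_and_or, not_le]
    have hdisj : Disjoint (Iio (-lam)) (Ioi lam) := by
      refine Set.disjoint_left.mpr fun x hx1 hx2 => ?_
      rw [mem_Iio] at hx1; rw [mem_Ioi] at hx2; linarith
    rw [hcompl, setIntegral_union hdisj measurableSet_Ioi hint.integrableOn hint.integrableOn]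
    have e3 : -lam ^ (2 * σ + 1) / (2 * σ + 1) = lam ^ (2 * σ + 1) / D := by
      rw [hD, div_neg, neg_div]
    have heq : 2 * (M ^ 2 * (-lam ^ (2 * σ + 1) / (2 * σ + 1)))
        = (2 * M ^ 2 / D) * lam ^ (2 * σ + 1) := by
      rw [e3]; ring
    linarith [hIio, hIoi]
  -- combine
  have hYeq : lam ^ (1 + 2 * σ) = lam ^ (2 * σ + 1) := by ring_nf
  rw [hsplit, hYeq]
  have hX : (0:ℝ) ≤ lam ^ (-1:ℝ) := Real.rpow_nonneg hl0.le _
  have hY : (0:ℝ) ≤ lam ^ (2 * σ + 1) := Real.rpow_nonneg hl0.le _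
  have hMD : (0:ℝ) ≤ 2 * M ^ 2 / D := by positivity
  have hexp : (2 * L ^ 2 + 2 * M ^ 2 / D) * (lam ^ (-1:ℝ) + lam ^ (2 * σ + 1))
      = 2 * L ^ 2 * (lam ^ (-1:ℝ) + lam ^ (2 * σ + 1))
        + (2 * M ^ 2 / D) * lam ^ (-1:ℝ) + (2 * M ^ 2 / D) * lam ^ (2 * σ + 1) := by ring
  have h2part2 : (∫ ξ in (Icc (-lam) lam)ᶜ, hfun ξ) ≤ (2 * M ^ 2 / D) * lam ^ (2 * σ + 1) :=
    hpart2
  linarith [mul_nonneg hMD hX]
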